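/- Let (Ω, μ) be a measure space with 0 < μ(Ω) < ∞, let y : Ω → ℝ^d be measurable, let E ⊆ ℝ^k be open, let h : ℝ^d → (0, ∞) and T : ℝ^d → ℝ^k be measurable with T(y(·)) μ-integrable and log h(y(·)) μ-integrable, and let A : E → ℝ be differentiable. Set p(y, η) = h(y)·exp(⟨η, T(y)⟩ − A(η)) and F(t) = −∫_Ω log p(y(x), η(t)) dμ(x) for a path η : ℝ → E differentiable at t₀. If η(t₀) satisfies the maximum-likelihood first-order condition ∇A(η(t₀)) = (1/μ(Ω))·∫_Ω T(y(x)) dμ(x), then F is differentiable at t₀ and F′(t₀) = ∫_Ω ⟨ η′(t₀), T(y(x)) − ∇A(η(t₀)) ⟩ dμ(x) = 0. That is, when the natural parameter is estimated by maximum likelihood, the additive term in the derivative of the negative log-likelihood region energy arising from the parameter's dependence on the region vanishes identically. -/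

import Mathlib

open MeasureTheory Real
open scoped RealInnerProductSpace

/-- When the natural parameter of a canonical exponential family is estimated by
maximum likelihood, i.e. `∇A(η(t₀)) = (1/μ(Ω))·∫_Ω T(y(x)) dμ(x)`, the negative
log-likelihood region energy `F(t) = −∫_Ω log p(y(x), η(t)) dμ(x)` is differentiable
at `t₀` with `F′(t₀) = ∫_Ω ⟨η′(t₀), T(y(x)) − ∇A(η(t₀))⟩ dμ(x) = 0`: the additive
term arising from the parameter's dependence on the region vanishes. -/
theorem expfam_ML_negloglik_param_deriv_vanishes {d k : ℕ} {Ω : Type*}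
    [MeasurableSpace Ω]
    (μ : Measure Ω) (hμ0 : μ Set.univ ≠ 0) (hμfin : μ Set.univ ≠ ⊤)
    (y : Ω → EuclideanSpace ℝ (Fin d)) (hy : Measurable y)
    (E : Set (EuclideanSpace ℝ (Fin k))) (hEopen : IsOpen E)
    (h : EuclideanSpace ℝ (Fin d) → ℝ) (hh : Measurable h) (hhpos : ∀ v, 0 < h v)
    (T : EuclideanSpace ℝ (Fin d) → EuclideanSpace ℝ (Fin k)) (hT : Measurable T)
    (hTint : Integrable (fun x => T (y x)) μ)
    (hloghint : Integrable (fun x => Real.log (h (y x))) μ)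
    (A : EuclideanSpace ℝ (Fin k) → ℝ)
    (gradA : EuclideanSpace ℝ (Fin k) → EuclideanSpace ℝ (Fin k))
    (hA : ∀ η ∈ E, HasGradientAt A (gradA η) η)
    (p : EuclideanSpace ℝ (Fin d) → EuclideanSpace ℝ (Fin k) → ℝ)
    (hp : ∀ v η, p v η = h v * Real.exp (⟪η, T v⟫ - A η))
    (η : ℝ → EuclideanSpace ℝ (Fin k)) (hηE : ∀ t, η t ∈ E)
    (t₀ : ℝ) (η' : EuclideanSpace ℝ (Fin k)) (hη : HasDerivAt η η' t₀)
    (hML : gradA (η t₀) = ((μ Set.univ).toReal)⁻¹ • ∫ x, T (y x) ∂μ)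
    (F : ℝ → ℝ) (hF : ∀ t, F t = - ∫ x, Real.log (p (y x) (η t)) ∂μ) :
    HasDerivAt F (∫ x, ⟪η', T (y x) - gradA (η t₀)⟫ ∂μ) t₀ ∧
    (∫ x, ⟪η', T (y x) - gradA (η t₀)⟫ ∂μ) = 0 := by
  have hfin : IsFiniteMeasure μ := ⟨lt_top_iff_ne_top.mpr hμfin⟩
  have hcpos : 0 < (μ Set.univ).toReal := ENNReal.toReal_pos hμ0 hμfin
  have hcg : (μ Set.univ).toReal • gradA (η t₀) = ∫ x, T (y x) ∂μ := by
    rw [hML, smul_smul, mul_inv_cancel₀ hcpos.ne', one_smul]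
  have hint2 : ∀ (v : EuclideanSpace ℝ (Fin k)),
      Integrable (fun x => ⟪v, T (y x)⟫) μ := fun v => hTint.const_inner v
  have hval : (∫ x, ⟪η', T (y x) - gradA (η t₀)⟫ ∂μ) = 0 := by
    have heq : (∫ x, ⟪η', T (y x) - gradA (η t₀)⟫ ∂μ)
        = (∫ x, ⟪η', T (y x)⟫ ∂μ) - ∫ x, (⟪η', gradA (η t₀)⟫ : ℝ) ∂μ := by
      rw [← integral_sub (hint2 η') (integrable_const _)]
      simp [inner_sub_right]
    rw [heq, integral_inner hTint, integral_const, ← hcg, real_inner_smul_right,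
      smul_eq_mul]
    simp only [Measure.real]
    ring
  refine ⟨?_, hval⟩
  rw [hval]
  have hFeq : F = fun t => (- ∫ x, Real.log (h (y x)) ∂μ)
      - ⟪η t, ∫ x, T (y x) ∂μ⟫ + (μ Set.univ).toReal * A (η t) := by
    funext t
    rw [hF t]
    have hlog : ∀ x, Real.log (p (y x) (η t)) =
        Real.log (h (y x)) + (⟪η t, T (y x)⟫ - A (η t)) := by
      intro x
      rw [hp, Real.log_mul (hhpos _).ne', Real.log_exp]
      exact (Real.exp_pos _).ne'
    have hsub : Integrable (fun x => (⟪η t, T (y x)⟫ : ℝ) - A (η t)) μ :=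
      (hint2 (η t)).sub (integrable_const _)
    simp_rw [hlog]
    rw [integral_add hloghint hsub,
        integral_sub (hint2 (η t)) (integrable_const _),
        integral_inner hTint, integral_const, smul_eq_mul]
    simp only [Measure.real]
    ring
  rw [hFeq]
  have h1 : HasDerivAt (fun t => (⟪η t, ∫ x, T (y x) ∂μ⟫ : ℝ))
      ⟪η', ∫ x, T (y x) ∂μ⟫ t₀ := by
    simpa using (hη.inner ℝ (hasDerivAt_const t₀ (∫ x, T (y x) ∂μ)))
  have h2 : HasDerivAt (fun t => A (η t)) ⟪gradA (η t₀), η'⟫ t₀ := by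
    have := ((hA (η t₀) (hηE t₀)).hasFDerivAt).comp_hasDerivAt t₀ hη
    simp at this
    exact this
  have hD := ((hasDerivAt_const t₀ (- ∫ x, Real.log (h (y x)) ∂μ)).sub h1).add
    (h2.const_mul ((μ Set.univ).toReal))
  have hzero : 0 - (⟪η', ∫ x, T (y x) ∂μ⟫ : ℝ)
      + (μ Set.univ).toReal * ⟪gradA (η t₀), η'⟫ = 0 := by
    rw [← hcg, real_inner_smul_right, real_inner_comm]
    ring
  exact hzero ▸ hD
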